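/- Let A be an associative unital division algebra, f, g automorphisms of A with f² = g² = id, and c ∈ F× central with c² ≠ 1 and c³ ≠ 1. Define x∘y = xy − c f(x) g(y), e = 1, and x∗y = R_e^{-1}(x)∘L_e^{-1}(y). Then x∗y = (1−c²)^{-2}(1−c³)·xy + (1+c)^{-2} c (1−c)^{-1} · (x g(y) + f(x) y − f(x) g(y)). -/
import Mathlib


/-- For `x∘y = xy − c f(x) g(y)` with `f² = g² = id` and a central scalar `c`
(`c² ≠ 1`, `c³ ≠ 1`), the unital twisted multiplication satisfies
`x∗y = (1−c²)⁻²(1−c³) xy + (1+c)⁻² c (1−c)⁻¹ (x g(y) + f(x) y − f(x) g(y))`. -/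
theorem stmt_18 (F : Type*) [Field F] (A : Type*) [DivisionRing A] [Algebra F A]
    (f g : A ≃ₐ[F] A) (hf2 : ∀ x : A, f (f x) = x) (hg2 : ∀ x : A, g (g x) = x)
    (c : F) (hc0 : c ≠ 0) (hc2 : c ^ 2 ≠ 1) (hc3 : c ^ 3 ≠ 1) :
    ∀ x y : A,
      ((1 - c ^ 2)⁻¹ • (x + c • f x)) * ((1 - c ^ 2)⁻¹ • (y + c • g y))
        - c • (f ((1 - c ^ 2)⁻¹ • (x + c • f x)) * g ((1 - c ^ 2)⁻¹ • (y + c • g y)))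
      = (((1 - c ^ 2) ^ 2)⁻¹ * (1 - c ^ 3)) • (x * y)
        + (((1 + c) ^ 2)⁻¹ * c * (1 - c)⁻¹) • (x * g y + f x * y - f x * g y) := by
  intro x y
  have h2 : (1 : F) - c ^ 2 ≠ 0 := sub_ne_zero.mpr (Ne.symm hc2)
  have hp : (1 : F) + c ≠ 0 := by
    intro h
    apply hc2
    have : c = -1 := by linear_combination h
    simp [this]
  have hm : (1 : F) - c ≠ 0 := by
    intro h
    apply hc2
    have : c = 1 := by linear_combination -h
    simp [this]
  simp only [map_add, map_smul, hf2, hg2, smul_add, mul_add, add_mul,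
    smul_mul_assoc, mul_smul_comm, smul_smul, smul_sub, sub_mul, mul_sub]
  match_scalars <;> field_simp <;> ring
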